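/- Let ε > 0 and δ ∈ (0,1) satisfy δ·(e^ε + 1) ≤ 1, set μ = (1/ε)·ln(δ·(e^ε + 1)) − 1 (so μ ≤ −1), and let w(x) = ((e^ε − 1)/(e^ε + 1))·exp(−ε·|x − μ|) for x ∈ ℤ. For an input count c ∈ ℤ, define the output measure of the negative one-sided Laplace mechanism by M_c(S) = ∑_{x ∈ ℤ, c + min(0,x) ∈ S} w(x) for S ⊆ ℤ. Then for all integers c, c′ with |c − c′| ≤ 1 and all sets S ⊆ ℤ, M_c(S) ≤ e^ε · M_{c′}(S) + δ. -/

import Mathlib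

/-- **(ε, δ)-DP of the negative one-sided Laplace mechanism.**
The mechanism on input count `c` outputs `c + min 0 z` where `z : ℤ` is drawn
with weight `w x = ((e^ε − 1)/(e^ε + 1)) · exp (−ε·|x − μ|)`,
`μ = (1/ε)·ln (δ·(e^ε + 1)) − 1`.  For all neighboring counts `c, c'`
(`|c − c'| ≤ 1`) and output sets `S ⊆ ℤ`, `M c S ≤ e^ε · M c' S + δ`. -/
theorem negative_one_sided_laplace_dp
    (ε δ : ℝ) (hε : 0 < ε) (hδ : δ ∈ Set.Ioo (0 : ℝ) 1)
    (hδε : δ * (Real.exp ε + 1) ≤ 1)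
    (μ : ℝ) (hμ : μ = (1 / ε) * Real.log (δ * (Real.exp ε + 1)) - 1)
    (w : ℤ → ℝ)
    (hw : ∀ x : ℤ, w x =
      ((Real.exp ε - 1) / (Real.exp ε + 1)) * Real.exp (-ε * |(x : ℝ) - μ|))
    (M : ℤ → Set ℤ → ℝ)
    (hM : ∀ (c : ℤ) (S : Set ℤ),
      M c S = ∑' x : ℤ, S.indicator (fun _ => w x) (c + min 0 x))
    (c c' : ℤ) (hcc' : |c - c'| ≤ 1) (S : Set ℤ) :
    M c S ≤ Real.exp ε * M c' S + δ := by
  classical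
  obtain ⟨hδ0, hδ1⟩ := hδ
  set E := Real.exp ε with hE
  have hE0 : 0 < E := Real.exp_pos ε
  have hE1 : 1 < E := by
    have := Real.add_one_lt_exp hε.ne'
    simpa [hE] using by linarith
  have hA0 : 0 ≤ (E - 1) / (E + 1) := div_nonneg (by linarith) (by linarith)
  -- basic facts about w
  have hwnn : ∀ x : ℤ, 0 ≤ w x := by
    intro x; rw [hw]; exact mul_nonneg hA0 (Real.exp_pos _).le
  have hratio : ∀ x y : ℤ, |(x : ℝ) - (y : ℝ)| ≤ 1 → w x ≤ Real.exp ε * w y := by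
    intro x y hxy
    rw [hw, hw]
    have h1 : Real.exp ε * ((E - 1) / (E + 1) * Real.exp (-ε * |(y : ℝ) - μ|))
        = (E - 1) / (E + 1) * Real.exp (ε + -ε * |(y : ℝ) - μ|) := by
      rw [Real.exp_add]; ring
    rw [h1]
    apply mul_le_mul_of_nonneg_left _ hA0
    apply Real.exp_le_exp.2
    have h2 : |(y : ℝ) - μ| - |(x : ℝ) - μ| ≤ |((y : ℝ) - μ) - ((x : ℝ) - μ)| :=
      abs_sub_abs_le_abs_sub _ _
    have h3 : |((y : ℝ) - μ) - ((x : ℝ) - μ)| = |(x : ℝ) - (y : ℝ)| := by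
      rw [abs_sub_comm]; ring_nf
    have h4 : |(y : ℝ) - μ| ≤ |(x : ℝ) - μ| + 1 := by rw [h3] at h2; linarith
    have h5 : ε * |(y : ℝ) - μ| ≤ ε * (|(x : ℝ) - μ| + 1) :=
      mul_le_mul_of_nonneg_left h4 hε.le
    nlinarith [h5]
  -- μ ≤ -1
  have hD0 : 0 < δ * (E + 1) := by positivity
  have hlog : Real.log (δ * (E + 1)) ≤ 0 := Real.log_nonpos hD0.le hδε
  have hμneg : μ ≤ -1 := by
    rw [hμ]
    have : (1 / ε) * Real.log (δ * (E + 1)) ≤ 0 :=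
      mul_nonpos_of_nonneg_of_nonpos (by positivity) hlog
    linarith
  -- summability of w
  have hr0 : (0 : ℝ) ≤ Real.exp (-ε) := (Real.exp_pos _).le
  have hr1 : Real.exp (-ε) < 1 := by
    rw [Real.exp_neg]
    rw [inv_lt_one_iff₀]
    right; exact hE1
  have hbound : ∀ x : ℤ, Real.exp (-ε * |(x : ℝ) - μ|)
      ≤ Real.exp (ε * |μ|) * Real.exp (-ε) ^ x.natAbs := by
    intro x
    rw [← Real.exp_nat_mul, ← Real.exp_add]
    apply Real.exp_le_exp.2
    have h1 : |(x : ℝ)| - |μ| ≤ |(x : ℝ) - μ| := by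
      have := abs_sub_abs_le_abs_sub (x : ℝ) μ
      linarith
    have h2 : |(x : ℝ)| = (x.natAbs : ℝ) := by
      simp [Nat.cast_natAbs]
    nlinarith [abs_nonneg μ, abs_nonneg (x : ℝ)]
  have hgeo : Summable (fun n : ℕ => Real.exp (ε * |μ|) * Real.exp (-ε) ^ n) :=
    (summable_geometric_of_lt_one hr0 hr1).mul_left _
  have hsume : Summable (fun x : ℤ => Real.exp (-ε * |(x : ℝ) - μ|)) := by
    apply Summable.of_nat_of_neg_add_one
    · apply hgeo.of_nonneg_of_le (fun n => (Real.exp_pos _).le)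
      intro n
      simpa using hbound (n : ℤ)
    · apply hgeo.of_nonneg_of_le (fun n => (Real.exp_pos _).le)
      intro n
      have h := hbound (-((n : ℤ) + 1))
      have h2 : (-((n : ℤ) + 1)).natAbs = n + 1 := by omega
      rw [h2] at h
      refine h.trans ?_
      have : Real.exp (-ε) ^ (n + 1) ≤ Real.exp (-ε) ^ n := by
        exact pow_le_pow_of_le_one hr0 hr1.le (Nat.le_succ n)
      nlinarith [Real.exp_pos (ε * |μ|)]
  have Sw : Summable w := by
    have : w = fun x : ℤ => (E - 1) / (E + 1) * Real.exp (-ε * |(x : ℝ) - μ|) :=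
      funext hw
    rw [this]
    exact hsume.mul_left _
  -- the positive-part geometric sum equals δ
  have hexpεμ : Real.exp (ε * μ) = δ * (E + 1) * Real.exp (-ε) := by
    have h1 : ε * μ = Real.log (δ * (E + 1)) + -ε := by
      rw [hμ]; field_simp; ring
    rw [h1, Real.exp_add, Real.exp_log hD0]
  have Hnat : ∀ n : ℕ, w (n : ℤ) =
      ((E - 1) / (E + 1) * Real.exp (ε * μ)) * Real.exp (-ε) ^ n := by
    intro n
    rw [hw]
    have habs : |((n : ℤ) : ℝ) - μ| = (n : ℝ) - μ := by
      push_cast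
      apply abs_of_nonneg
      have : (0 : ℝ) ≤ (n : ℝ) := Nat.cast_nonneg n
      linarith
    push_cast at habs ⊢
    rw [habs, show -ε * ((n : ℝ) - μ) = ε * μ + (n : ℕ) * (-ε) by push_cast; ring,
      Real.exp_add, Real.exp_nat_mul]
    ring
  have Hsum0 : ∑' n : ℕ, w (n : ℤ) = δ := by
    have h1 : ∑' n : ℕ, w (n : ℤ)
        = ((E - 1) / (E + 1) * Real.exp (ε * μ)) * (1 - Real.exp (-ε))⁻¹ := by
      rw [tsum_congr Hnat, tsum_mul_left, tsum_geometric_of_lt_one hr0 hr1]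
    rw [h1, hexpεμ, Real.exp_neg, ← hE]
    have hEne : E ≠ 0 := hE0.ne'
    have h2 : 1 - E⁻¹ = (E - 1) / E := by field_simp
    rw [h2]
    have hE1ne : E - 1 ≠ 0 := by linarith
    have hEp1 : E + 1 ≠ 0 := by linarith
    field_simp
  -- abbreviations for the summands
  set f : ℤ → ℝ := fun x => S.indicator (fun _ => w x) (c + min 0 x) with hf
  set f' : ℤ → ℝ := fun x => S.indicator (fun _ => w x) (c' + min 0 x) with hf'
  have hind_nn : ∀ (d : ℤ) (x : ℤ), 0 ≤ S.indicator (fun _ => w x) (d + min 0 x) :=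
    fun d x => Set.indicator_nonneg (fun _ _ => hwnn x) _
  have hind_le : ∀ (d : ℤ) (x : ℤ), S.indicator (fun _ => w x) (d + min 0 x) ≤ w x := by
    intro d x
    rw [Set.indicator_apply]
    split_ifs
    · exact le_rfl
    · exact hwnn x
  have Sf : Summable f := Summable.of_nonneg_of_le (fun x => hind_nn c x)
    (fun x => hind_le c x) Sw
  have Sf' : Summable f' := Summable.of_nonneg_of_le (fun x => hind_nn c' x)
    (fun x => hind_le c' x) Sw
  -- the shift
  set s : ℤ := c - c' with hs
  have hs1 : s ≤ 1 := (abs_le.1 hcc').2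
  have hs2 : -1 ≤ s := (abs_le.1 hcc').1
  have hsR : |(s : ℝ)| ≤ 1 := by
    have : ((|s| : ℤ) : ℝ) ≤ ((1 : ℤ) : ℝ) := Int.cast_le.2 hcc'
    rwa [Int.cast_abs, Int.cast_one] at this
  -- split M c S into negative and nonnegative parts
  set fneg : ℤ → ℝ := fun x => if x < 0 then f x else 0 with hfneg
  set fpos : ℤ → ℝ := fun x => if 0 ≤ x then f x else 0 with hfpos
  have fneg_nn : ∀ x, 0 ≤ fneg x := by
    intro x; rw [hfneg]; dsimp only; split_ifs
    · exact hind_nn c x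
    · exact le_rfl
  have fpos_nn : ∀ x, 0 ≤ fpos x := by
    intro x; rw [hfpos]; dsimp only; split_ifs
    · exact hind_nn c x
    · exact le_rfl
  have fneg_le : ∀ x, fneg x ≤ w x := by
    intro x; rw [hfneg]; dsimp only; split_ifs
    · exact hind_le c x
    · exact hwnn x
  have fpos_le : ∀ x, fpos x ≤ w x := by
    intro x; rw [hfpos]; dsimp only; split_ifs
    · exact hind_le c x
    · exact hwnn x
  have Sfneg : Summable fneg := Summable.of_nonneg_of_le fneg_nn fneg_le Sw
  have Sfpos : Summable fpos := Summable.of_nonneg_of_le fpos_nn fpos_le Sw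
  have hsplit : M c S = (∑' x : ℤ, fneg x) + ∑' x : ℤ, fpos x := by
    rw [hM, ← Summable.tsum_add Sfneg Sfpos]
    apply tsum_congr
    intro x
    rw [hfneg, hfpos]
    dsimp only
    by_cases hx : x < 0
    · rw [if_pos hx, if_neg (by omega), add_zero]
    · rw [if_neg hx, if_pos (by omega), zero_add]
  -- bound the negative part
  let e : ℤ ≃ ℤ := ⟨fun x => x + s, fun x => x - s, fun x => show x + s - s = x by omega,
    fun x => show x - s + s = x by omega⟩
  have he : ∀ x : ℤ, e x = x + s := fun x => rfl
  have Srhs : Summable (fun x : ℤ => Real.exp ε * f' (x + s)) := by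
    have h := e.summable_iff.2 Sf'
    have h2 : Summable (fun x : ℤ => f' (x + s)) := by
      exact h
    exact h2.mul_left _
  have hptwise : ∀ x : ℤ, fneg x ≤ Real.exp ε * f' (x + s) := by
    intro x
    rw [hfneg]; dsimp only
    split_ifs with hx
    · have hmin1 : min 0 x = x := min_eq_right hx.le
      have hmin2 : min 0 (x + s) = x + s := min_eq_right (by omega)
      have hout : c' + min 0 (x + s) = c + min 0 x := by
        rw [hmin1, hmin2]; omega
      rw [hf, hf']
      dsimp only
      rw [hout, Set.indicator_apply, Set.indicator_apply]
      split_ifs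
      · apply hratio
        have : ((x : ℝ)) - ((x + s : ℤ) : ℝ) = -(s : ℝ) := by push_cast; ring
        rw [this, abs_neg]
        exact hsR
      · simp
    · exact mul_nonneg (Real.exp_pos _).le (hind_nn c' _)
  have hnegbound : (∑' x : ℤ, fneg x) ≤ Real.exp ε * M c' S := by
    have h1 : (∑' x : ℤ, fneg x) ≤ ∑' x : ℤ, Real.exp ε * f' (x + s) :=
      Summable.tsum_le_tsum hptwise Sfneg Srhs
    have h2 : (∑' x : ℤ, Real.exp ε * f' (x + s)) = Real.exp ε * ∑' x : ℤ, f' (x + s) :=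
      tsum_mul_left
    have h3 : (∑' x : ℤ, f' (x + s)) = ∑' x : ℤ, f' x := e.tsum_eq f'
    rw [h2, h3] at h1
    rw [hM]
    exact h1
  -- bound the nonnegative part
  have wpos_sum : (∑' x : ℤ, (if 0 ≤ x then w x else 0)) = δ := by
    have hinj : Function.Injective (fun n : ℕ => (n : ℤ)) := fun a b h => by
      simpa using h
    have h0 : Function.support (fun x : ℤ => if 0 ≤ x then w x else 0)
        ⊆ Set.range (fun n : ℕ => (n : ℤ)) := by
      intro x hx
      rcases le_or_gt 0 x with h | h
      · exact ⟨x.toNat, by simp [Int.toNat_of_nonneg h]⟩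
      · exfalso; apply hx; simp [if_neg (not_le.2 h)]
    have := hinj.tsum_eq h0
    rw [← this]
    have : (∑' n : ℕ, (if (0:ℤ) ≤ (n : ℤ) then w (n : ℤ) else 0)) = ∑' n : ℕ, w (n : ℤ) := by
      apply tsum_congr
      intro n
      rw [if_pos (Int.natCast_nonneg n)]
    rw [this, Hsum0]
  have hposbound : (∑' x : ℤ, fpos x) ≤ δ := by
    rw [← wpos_sum]
    apply Summable.tsum_le_tsum _ Sfpos
    · apply Summable.of_nonneg_of_le _ _ Sw
      · intro x; split_ifs
        · exact hwnn x
        · exact le_refl 0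
      · intro x; split_ifs
        · exact le_refl (w x)
        · exact hwnn x
    · intro x
      rw [hfpos]; dsimp only
      split_ifs with hx
      · exact hind_le c x
      · exact le_refl 0
  rw [hsplit]
  exact add_le_add hnegbound hposbound
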